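/- Let (ρᵢ)_{i ∈ ℕ} be proper convex functions on a topological vector space X with ρᵢ(0) = 0, and suppose there exists φ₀ ∈ X* with Σ_{i=1}^∞ ρᵢ*(φ₀) < ∞. Let c : ℕ → [0, ∞) be non-decreasing with c(n) → ∞. Define Λₙ(X) = inf{Σ_{i=1}^n ρᵢ(Xᵢ) | Σᵢ Xᵢ = X}. If W ∈ Σ_{i=1}^m dom(ρᵢ) for some m, and each Λₙ is exact on its domain (the infimum is attained whenever finite), then there exist n* ∈ ℕ and X₁, ..., X_{n*} with Σᵢ Xᵢ = W minimizing Σ_{i=1}^n ρᵢ(Xᵢ) + c(n) over all n ∈ ℕ and all decompositions of W into n parts. -/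

import Mathlib

/-- The convex conjugate of `f : X → [-∞, ∞]` at a continuous linear functional. -/
noncomputable def conj {X : Type*} [AddCommGroup X] [Module ℝ X] [TopologicalSpace X]
    (f : X → EReal) (φ : X →L[ℝ] ℝ) : EReal :=
  ⨆ x : X, ((φ x : ℝ) : EReal) - f x

/-- The risk sharing functional of the first `n` agents:
`Λₙ(w) = inf {∑_{i<n} ρᵢ(xᵢ) | ∑ xᵢ = w}`. -/
noncomputable def Lam {X : Type*} [AddCommGroup X] [Module ℝ X]
    (ρ : ℕ → X → EReal) (n : ℕ) (w : X) : EReal :=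
  sInf {s : EReal | ∃ f : Fin n → X, ∑ i, f i = w ∧ s = ∑ i, ρ i.1 (f i)}

lemma ereal_coe_finset_sum {ι : Type*} (s : Finset ι) (g : ι → ℝ) :
    ((∑ i ∈ s, g i : ℝ) : EReal) = ∑ i ∈ s, ((g i : ℝ) : EReal) := by
  classical
  induction s using Finset.cons_induction with
  | empty => simp
  | cons i s hi ih => rw [Finset.sum_cons, Finset.sum_cons, EReal.coe_add, ih]

/-- Existence of optimal portfolio splits: given normalised proper convex risk
measures `(ρᵢ)` that are infinitely supportable by some `φ₀`, a non-decreasing cost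
function `c` with `c(n) → ∞`, exactness of each `Λₙ` on its domain, and
`W ∈ ∑_{i<m} dom(ρᵢ)`, there exist `n*` and a decomposition of `W` into `n*`
parts minimising `∑ᵢ ρᵢ(Xᵢ) + c(n)` over all `n` and all decompositions. -/
theorem optimal_portfolio_split {X : Type*} [AddCommGroup X] [Module ℝ X]
    [TopologicalSpace X]
    (ρ : ℕ → X → EReal)
    (hbot : ∀ i x, ρ i x ≠ ⊥) (hproper : ∀ i, ∃ x, ρ i x ≠ ⊤)
    (hconv : ∀ i (x y : X) (a b : ℝ), 0 ≤ a → 0 ≤ b → a + b = 1 →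
      ρ i (a • x + b • y) ≤ (a : EReal) * ρ i x + (b : EReal) * ρ i y)
    (hnorm : ∀ i, ρ i 0 = 0)
    (φ₀ : X →L[ℝ] ℝ) (M : ℝ)
    (hφ₀ : ∀ n : ℕ, ∑ i ∈ Finset.range n, conj (ρ i) φ₀ ≤ (M : EReal))
    (c : ℕ → ℝ) (hc0 : ∀ n, 0 ≤ c n) (hcmono : Monotone c)
    (hcinf : Filter.Tendsto c Filter.atTop Filter.atTop)
    (hexact : ∀ (n : ℕ) (w : X), Lam ρ n w ≠ ⊤ → Lam ρ n w ≠ ⊥ →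
      ∃ f : Fin n → X, ∑ i, f i = w ∧ ∑ i, ρ i.1 (f i) = Lam ρ n w)
    (W : X) (m : ℕ) (hW : ∃ f : Fin m → X, ∑ i, f i = W ∧ ∀ i, ρ i.1 (f i) ≠ ⊤) :
    ∃ (nstar : ℕ) (f : Fin nstar → X), ∑ i, f i = W ∧
      ∀ (n : ℕ) (g : Fin n → X), ∑ i, g i = W →
        (∑ i, ρ i.1 (f i)) + (c nstar : EReal) ≤ (∑ i, ρ i.1 (g i)) + (c n : EReal) := by
  classical
  obtain ⟨f₀, hf₀sum, hf₀top⟩ := hW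
  -- basic facts about the conjugates
  have hconj0 : ∀ i, (0 : EReal) ≤ conj (ρ i) φ₀ := by
    intro i
    have h := le_iSup (fun x : X => ((φ₀ x : ℝ) : EReal) - ρ i x) (0 : X)
    simpa [conj, hnorm i] using h
  have hconjM : ∀ i, conj (ρ i) φ₀ ≤ (M : EReal) := by
    intro i
    refine le_trans ?_ (hφ₀ (i + 1))
    exact Finset.single_le_sum (fun j _ => hconj0 j) (by simp)
  set a : ℕ → ℝ := fun i => (conj (ρ i) φ₀).toReal with ha
  have hconj_nb : ∀ i, conj (ρ i) φ₀ ≠ ⊥ := by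
    intro i h
    simpa [h] using hconj0 i
  have hconj_nt : ∀ i, conj (ρ i) φ₀ ≠ ⊤ := by
    intro i h
    simpa [h] using hconjM i
  have hconj_eq : ∀ i, conj (ρ i) φ₀ = ((a i : ℝ) : EReal) := fun i =>
    (EReal.coe_toReal (hconj_nt i) (hconj_nb i)).symm
  -- pointwise Fenchel inequality
  have hpt : ∀ (i : ℕ) (x : X), ((φ₀ x - a i : ℝ) : EReal) ≤ ρ i x := by
    intro i x
    by_cases h : ρ i x = ⊤
    · simp [h]
    · have hr : ρ i x = (((ρ i x).toReal : ℝ) : EReal) := (EReal.coe_toReal h (hbot i x)).symm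
      have h1 : ((φ₀ x : ℝ) : EReal) - ρ i x ≤ conj (ρ i) φ₀ :=
        le_iSup (fun x : X => ((φ₀ x : ℝ) : EReal) - ρ i x) x
      rw [hr, hconj_eq i, ← EReal.coe_sub, EReal.coe_le_coe_iff] at h1
      rw [hr, EReal.coe_le_coe_iff]
      linarith
  -- uniform lower bound for all decompositions
  set L : ℝ := φ₀ W - M with hL
  have hlow : ∀ (n : ℕ) (g : Fin n → X), ∑ i, g i = W →
      ((L : ℝ) : EReal) ≤ ∑ i, ρ i.1 (g i) := by
    intro n g hg
    have hsum_a : ∑ i : Fin n, a i.1 ≤ M := by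
      have h1 : ((∑ i ∈ Finset.range n, a i : ℝ) : EReal) ≤ (M : EReal) := by
        rw [ereal_coe_finset_sum]
        calc ∑ i ∈ Finset.range n, ((a i : ℝ) : EReal)
            = ∑ i ∈ Finset.range n, conj (ρ i) φ₀ := by
              exact Finset.sum_congr rfl fun i _ => (hconj_eq i).symm
          _ ≤ (M : EReal) := hφ₀ n
      rw [EReal.coe_le_coe_iff] at h1
      rw [Fin.sum_univ_eq_sum_range]
      exact h1
    have hφsum : ∑ i : Fin n, φ₀ (g i) = φ₀ W := by rw [← map_sum, hg]
    calc ((L : ℝ) : EReal)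
        ≤ ((∑ i : Fin n, (φ₀ (g i) - a i.1) : ℝ) : EReal) := by
          rw [EReal.coe_le_coe_iff, Finset.sum_sub_distrib, hφsum, hL]
          linarith
      _ = ∑ i : Fin n, ((φ₀ (g i) - a i.1 : ℝ) : EReal) := ereal_coe_finset_sum _ _
      _ ≤ ∑ i : Fin n, ρ i.1 (g i) := Finset.sum_le_sum fun i _ => hpt i.1 (g i)
  have hLamLow : ∀ n : ℕ, ((L : ℝ) : EReal) ≤ Lam ρ n W := by
    intro n
    refine le_sInf ?_
    rintro s ⟨g, hg, rfl⟩
    exact hlow n g hg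
  -- upper bound: the value of the given decomposition
  set Sr : ℝ := ∑ i : Fin m, (ρ i.1 (f₀ i)).toReal with hSr
  have hSval : ∑ i : Fin m, ρ i.1 (f₀ i) = ((Sr : ℝ) : EReal) := by
    rw [hSr, ereal_coe_finset_sum]
    exact Finset.sum_congr rfl fun i _ =>
      (EReal.coe_toReal (hf₀top i) (hbot i.1 (f₀ i))).symm
  have hupper : ∀ n : ℕ, m ≤ n → Lam ρ n W ≤ ((Sr : ℝ) : EReal) := by
    intro n hmn
    set D : ℕ → X := fun i => if h : i < m then f₀ ⟨i, h⟩ else 0 with hD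
    have hDsum : ∀ k : ℕ, m ≤ k → ∑ i : Fin k, D i.1 = W := by
      intro k hk
      rw [Fin.sum_univ_eq_sum_range]
      rw [← Finset.sum_subset (Finset.range_subset_range.2 hk)
        (fun x _ hx => by
          have : ¬ x < m := by simpa using hx
          simp [hD, this])]
      rw [← Fin.sum_univ_eq_sum_range, ← hf₀sum]
      exact Finset.sum_congr rfl fun i _ => by simp [hD, i.2]
    have hDval : ∑ i : Fin n, ρ i.1 (D i.1) = ((Sr : ℝ) : EReal) := by
      rw [Fin.sum_univ_eq_sum_range (fun i => ρ i (D i))]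
      rw [← Finset.sum_subset (Finset.range_subset_range.2 hmn)
        (fun x _ hx => by
          have : ¬ x < m := by simpa using hx
          simp [hD, this, hnorm x])]
      rw [← Fin.sum_univ_eq_sum_range (fun i => ρ i (D i)), ← hSval]
      exact Finset.sum_congr rfl fun i _ => by simp [hD, i.2]
    exact sInf_le ⟨fun i => D i.1, hDsum n hmn, hDval.symm⟩
  -- the objective
  set F : ℕ → EReal := fun n => Lam ρ n W + ((c n : ℝ) : EReal) with hF
  -- choose N beyond which the cost dominates
  obtain ⟨N, hN⟩ := Filter.eventually_atTop.1 (Filter.tendsto_atTop.1 hcinf (Sr + c m - L))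
  set N' : ℕ := max N m with hN'
  -- minimise F over the finite range
  obtain ⟨nstar, hnstar_mem, hnstar_min⟩ :=
    Finset.exists_min_image (Finset.range (N' + 1)) F ⟨0, by simp⟩
  have hm_mem : m ∈ Finset.range (N' + 1) :=
    Finset.mem_range.2 (Nat.lt_succ_of_le (le_max_right N m))
  have hFm : F m ≤ ((Sr + c m : ℝ) : EReal) := by
    rw [hF, EReal.coe_add]
    exact add_le_add_left (hupper m le_rfl) _
  have hmin_global : ∀ n : ℕ, F nstar ≤ F n := by
    intro n
    by_cases hn : n ∈ Finset.range (N' + 1)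
    · exact hnstar_min n hn
    · have hnN : N ≤ n := by
        have := Finset.mem_range.not.1 hn
        omega
      have hcn : Sr + c m - L ≤ c n := hN n hnN
      have h1 : ((Sr + c m : ℝ) : EReal) ≤ F n := by
        calc ((Sr + c m : ℝ) : EReal) ≤ ((L + c n : ℝ) : EReal) := by
              rw [EReal.coe_le_coe_iff]; linarith
          _ = ((L : ℝ) : EReal) + ((c n : ℝ) : EReal) := EReal.coe_add _ _
          _ ≤ F n := add_le_add_left (hLamLow n) _
      exact (hnstar_min m hm_mem).trans (hFm.trans h1)
  -- the minimiser has finite value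
  have hFstar_le : F nstar ≤ ((Sr + c m : ℝ) : EReal) := (hnstar_min m hm_mem).trans hFm
  have hLam_nt : Lam ρ nstar W ≠ ⊤ := by
    intro h
    rw [hF] at hFstar_le
    simp only [h, EReal.top_add_of_ne_bot (EReal.coe_ne_bot _)] at hFstar_le
    exact (EReal.coe_lt_top _).not_ge hFstar_le
  have hLam_nb : Lam ρ nstar W ≠ ⊥ := by
    intro h
    have := hLamLow nstar
    rw [h] at this
    exact (EReal.bot_lt_coe _).not_ge this
  obtain ⟨f, hfsum, hfval⟩ := hexact nstar W hLam_nt hLam_nb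
  refine ⟨nstar, f, hfsum, ?_⟩
  intro n g hg
  have h1 : Lam ρ n W ≤ ∑ i, ρ i.1 (g i) := sInf_le ⟨g, hg, rfl⟩
  calc (∑ i, ρ i.1 (f i)) + ((c nstar : ℝ) : EReal)
      = F nstar := by rw [hF, hfval]
    _ ≤ F n := hmin_global n
    _ ≤ (∑ i, ρ i.1 (g i)) + ((c n : ℝ) : EReal) := add_le_add_left h1 _
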